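/- If the domain X of a dialgebra homomorphism h : (X,f) → (Y,g) is nonempty, then h factors (in Dialg(F,B), for arbitrary Set endofunctors F and B) as an injective dialgebra homomorphism after a surjective dialgebra homomorphism. -/

import Mathlib

open CategoryTheory

universe u

/-- An (F,B)-dialgebra: a set together with a map `F X → B X`. -/
structure Dialgebra (F B : Type u ⥤ Type u) where
  carrier : Type u
  str : F.obj carrier → B.obj carrier

/-- A dialgebra homomorphism: `g ∘ F h = B h ∘ f`. -/
def IsDialgHom {F B : Type u ⥤ Type u} (X Y : Dialgebra F B)
    (h : X.carrier → Y.carrier) : Prop :=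
  Y.str ∘ F.map (TypeCat.ofHom h) = B.map (TypeCat.ofHom h) ∘ X.str

/-- If the domain of a dialgebra homomorphism is nonempty, then it factors in
`Dialg(F,B)` (for arbitrary `Set` endofunctors `F`, `B`) as an injective dialgebra
homomorphism after a surjective one. -/
theorem dialg_factorisation_of_nonempty (F B : Type u ⥤ Type u)
    (X Y : Dialgebra F B) (hne : Nonempty X.carrier)
    (h : X.carrier → Y.carrier) (hh : IsDialgHom X Y h) :
    ∃ (X' : Dialgebra F B) (e : X.carrier → X'.carrier) (m : X'.carrier → Y.carrier),
      IsDialgHom X X' e ∧ IsDialgHom X' Y m ∧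
      Function.Surjective e ∧ Function.Injective m ∧ m ∘ e = h := by
  classical
  obtain ⟨x0⟩ := hne
  set Xc : Type u := ↥(Set.range h) with hXc
  let e : X.carrier → Xc := Set.rangeFactorization h
  let m : Xc → Y.carrier := Subtype.val
  have esurj : Function.Surjective e := Set.rangeFactorization_surjective
  have minj : Function.Injective m := Subtype.val_injective
  let s : Xc → X.carrier := Function.surjInv esurj
  have hes : ∀ z, e (s z) = z := fun z => Function.surjInv_eq esurj z
  have hhs : (h ∘ s : Xc → Y.carrier) = m := by
    funext z
    show m (e (s z)) = m z
    rw [hes]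
  let str' : F.obj Xc → B.obj Xc := B.map (TypeCat.ofHom e) ∘ X.str ∘ F.map (TypeCat.ofHom s)
  let X' : Dialgebra F B := ⟨Xc, str'⟩
  have hBme : (B.map (TypeCat.ofHom m) ∘ B.map (TypeCat.ofHom e) : B.obj X.carrier → B.obj Y.carrier) = B.map (TypeCat.ofHom h) := by
    funext x; exact (B.map_comp_apply (TypeCat.ofHom e) (TypeCat.ofHom m) x).symm
  have hFme : (F.map (TypeCat.ofHom m) ∘ F.map (TypeCat.ofHom e) : F.obj X.carrier → F.obj Y.carrier) = F.map (TypeCat.ofHom h) := by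
    funext x; exact (F.map_comp_apply (TypeCat.ofHom e) (TypeCat.ofHom m) x).symm
  have hFhs : (F.map (TypeCat.ofHom h) ∘ F.map (TypeCat.ofHom s) : F.obj Xc → F.obj Y.carrier) = F.map (TypeCat.ofHom m) := by
    rw [← hhs]; funext x; exact (F.map_comp_apply (TypeCat.ofHom s) (TypeCat.ofHom h) x).symm
  have hmhom : IsDialgHom X' Y m := by
    show Y.str ∘ F.map (TypeCat.ofHom m) = B.map (TypeCat.ofHom m) ∘ str'
    calc Y.str ∘ F.map (TypeCat.ofHom m) = Y.str ∘ (F.map (TypeCat.ofHom h) ∘ F.map (TypeCat.ofHom s)) := by rw [hFhs]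
      _ = (Y.str ∘ F.map (TypeCat.ofHom h)) ∘ F.map (TypeCat.ofHom s) := rfl
      _ = (B.map (TypeCat.ofHom h) ∘ X.str) ∘ F.map (TypeCat.ofHom s) := by rw [hh]
      _ = ((B.map (TypeCat.ofHom m) ∘ B.map (TypeCat.ofHom e)) ∘ X.str) ∘ F.map (TypeCat.ofHom s) := by rw [hBme]
      _ = B.map (TypeCat.ofHom m) ∘ str' := rfl
  -- B.map (TypeCat.ofHom m) is injective
  have hXcne : Nonempty Xc := ⟨e x0⟩
  let r : Y.carrier → Xc := Function.invFun m
  have hrm : ∀ z, r (m z) = z := Function.leftInverse_invFun minj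
  have h1 : (TypeCat.ofHom m ≫ TypeCat.ofHom r : Xc ⟶ Xc) = 𝟙 Xc := by ext z; exact congrArg Subtype.val (hrm z)
  have hBrm : (B.map (TypeCat.ofHom r) ∘ B.map (TypeCat.ofHom m) : B.obj Xc → B.obj Xc) = id := by
    funext x
    calc (B.map (TypeCat.ofHom r)) ((B.map (TypeCat.ofHom m)) x) = B.map (TypeCat.ofHom m ≫ TypeCat.ofHom r) x := (B.map_comp_apply (TypeCat.ofHom m) (TypeCat.ofHom r) x).symm
      _ = B.map (𝟙 Xc) x := by rw [h1]
      _ = x := B.map_id_apply Xc x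
  have hBminj : Function.Injective (B.map (TypeCat.ofHom m)) := by
    intro a b hab
    have := congrArg (B.map (TypeCat.ofHom r)) hab
    calc a = (B.map (TypeCat.ofHom r) ∘ B.map (TypeCat.ofHom m)) a := by rw [hBrm]; rfl
      _ = (B.map (TypeCat.ofHom r) ∘ B.map (TypeCat.ofHom m)) b := this
      _ = b := by rw [hBrm]; rfl
  have key : B.map (TypeCat.ofHom m) ∘ (str' ∘ F.map (TypeCat.ofHom e)) = B.map (TypeCat.ofHom m) ∘ (B.map (TypeCat.ofHom e) ∘ X.str) := by
    calc B.map (TypeCat.ofHom m) ∘ (str' ∘ F.map (TypeCat.ofHom e)) = (B.map (TypeCat.ofHom m) ∘ str') ∘ F.map (TypeCat.ofHom e) := rfl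
      _ = (Y.str ∘ F.map (TypeCat.ofHom m)) ∘ F.map (TypeCat.ofHom e) := by rw [hmhom]
      _ = Y.str ∘ (F.map (TypeCat.ofHom m) ∘ F.map (TypeCat.ofHom e)) := rfl
      _ = Y.str ∘ F.map (TypeCat.ofHom h) := by rw [hFme]
      _ = B.map (TypeCat.ofHom h) ∘ X.str := hh
      _ = (B.map (TypeCat.ofHom m) ∘ B.map (TypeCat.ofHom e)) ∘ X.str := by rw [hBme]
      _ = B.map (TypeCat.ofHom m) ∘ (B.map (TypeCat.ofHom e) ∘ X.str) := rfl
  have hehom : IsDialgHom X X' e := by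
    show str' ∘ F.map (TypeCat.ofHom e) = B.map (TypeCat.ofHom e) ∘ X.str
    funext a
    exact hBminj (congrFun key a)
  exact ⟨X', e, m, hehom, hmhom, esurj, minj, rfl⟩
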